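/- Let H be a finite set of positive integers and p a prime. Define the p-scaled set H_(p) = {h/gcd(h,p) : h ∈ H} and the p-sieved set H^(p) = {h ∈ H : p ∤ h}. Then d(M(H)) = (1/p)·d(M(H_(p))) + (1 − 1/p)·d(M(H^(p))). -/

import Mathlib

open Filter

/-- The number of elements of `S` lying in `[1, x]`. -/
noncomputable def countIn (S : Set ℕ) (x : ℕ) : ℕ := (S ∩ Set.Icc 1 x).ncard

/-- `S` has asymptotic density `δ`. -/
def HasDensity (S : Set ℕ) (δ : ℝ) : Prop :=
  Tendsto (fun x : ℕ => (countIn S x : ℝ) / x) atTop (nhds δ)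

/-- The upper asymptotic density of `S`. -/
noncomputable def upperDensity (S : Set ℕ) : ℝ :=
  limsup (fun x : ℕ => (countIn S x : ℝ) / x) atTop

/-- The set of multiples of a finite set `H` of positive integers. -/
def setOfMultiples (H : Finset ℕ) : Set ℕ := {n : ℕ | 0 < n ∧ ∃ h ∈ H, h ∣ n}


def cnt (H : Finset ℕ) (x : ℕ) : ℕ :=
  ((Finset.Ioc 0 x).filter (fun n => ∃ h ∈ H, h ∣ n)).card


lemma countIn_eq (H : Finset ℕ) (x : ℕ) :
    countIn (setOfMultiples H) x = cnt H x := by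
  unfold countIn cnt setOfMultiples
  rw [← Set.ncard_coe_finset]
  congr 1
  ext n
  simp only [Finset.coe_filter, Finset.mem_Ioc, Set.mem_inter_iff, Set.mem_setOf_eq,
    Set.mem_Icc]
  constructor
  · rintro ⟨⟨h1, h2⟩, h3, h4⟩; exact ⟨⟨h3, h4⟩, h2⟩
  · rintro ⟨⟨h3, h4⟩, h2⟩; exact ⟨⟨h3, h2⟩, h3, h4⟩

lemma cnt_shift (H : Finset ℕ) (L : ℕ) (hL : ∀ h ∈ H, h ∣ L) (k m : ℕ) :
    ((Finset.Ioc (k*L) (k*L+m)).filter (fun n => ∃ h ∈ H, h ∣ n)).card = cnt H m := by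
  unfold cnt
  apply Finset.card_nbij' (fun n => n - k*L) (fun n => n + k*L)
  · intro n hn
    simp only [Finset.mem_coe, Finset.mem_filter, Finset.mem_Ioc] at hn ⊢
    obtain ⟨⟨h1, h2⟩, h, hh, hd⟩ := hn
    refine ⟨⟨by omega, by omega⟩, h, hh, ?_⟩
    exact (Nat.dvd_sub hd (Dvd.dvd.mul_left (hL h hh) k))
  · intro n hn
    simp only [Finset.mem_coe, Finset.mem_filter, Finset.mem_Ioc] at hn ⊢
    obtain ⟨⟨h1, h2⟩, h, hh, hd⟩ := hn
    refine ⟨⟨by omega, by omega⟩, h, hh, ?_⟩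
    exact dvd_add hd (Dvd.dvd.mul_left (hL h hh) k)
  · intro n hn
    simp only [Finset.mem_coe, Finset.mem_filter, Finset.mem_Ioc] at hn
    dsimp only
    omega
  · intro n hn
    dsimp only
    omega

lemma cnt_split (H : Finset ℕ) (a b : ℕ) (hab : a ≤ b) :
    cnt H b = cnt H a + ((Finset.Ioc a b).filter (fun n => ∃ h ∈ H, h ∣ n)).card := by
  unfold cnt
  rw [← Finset.card_union_of_disjoint, ← Finset.filter_union,
    Finset.Ioc_union_Ioc_eq_Ioc (Nat.zero_le a) hab]
  apply Finset.disjoint_filter_filter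
  rw [Finset.disjoint_left]
  intro n h1 h2
  simp only [Finset.mem_Ioc] at h1 h2
  omega

lemma cnt_mul (H : Finset ℕ) (L : ℕ) (hL : ∀ h ∈ H, h ∣ L) (k : ℕ) :
    cnt H (k * L) = k * cnt H L := by
  induction k with
  | zero => simp [cnt]
  | succ k ih =>
    have : (k+1) * L = k * L + L := by ring
    rw [this, cnt_split H (k*L) (k*L+L) (by omega)]
    rw [cnt_shift H L hL k L, ih]
    ring

lemma cnt_le (H : Finset ℕ) (x : ℕ) : cnt H x ≤ x := by
  unfold cnt
  calc _ ≤ (Finset.Ioc 0 x).card := Finset.card_filter_le _ _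
  _ = x := by simp


lemma cnt_decomp (H : Finset ℕ) (L : ℕ) (hL : ∀ h ∈ H, h ∣ L) (k m : ℕ) :
    cnt H (k * L + m) = k * cnt H L + cnt H m := by
  rw [cnt_split H (k*L) (k*L+m) (by omega), cnt_shift H L hL k m, cnt_mul H L hL k]

lemma hasDensity_cnt (H : Finset ℕ) (L : ℕ) (hL0 : 0 < L) (hL : ∀ h ∈ H, h ∣ L) :
    HasDensity (setOfMultiples H) ((cnt H L : ℝ) / L) := by
  unfold HasDensity
  simp only [countIn_eq]
  set c : ℝ := (cnt H L : ℝ) with hc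
  set Lr : ℝ := (L : ℝ) with hLr
  have hLrpos : (0:ℝ) < Lr := by rw [hLr]; exact_mod_cast hL0
  have hcle : c ≤ Lr := by rw [hc, hLr]; exact_mod_cast cnt_le H L
  have hcnn : (0:ℝ) ≤ c := by positivity
  have hzero : Tendsto (fun x : ℕ => (cnt H x : ℝ) / x - c / Lr) atTop (nhds 0) := by
    apply squeeze_zero_norm' (a := fun x : ℕ => 2 * Lr / x)
    · filter_upwards [eventually_ge_atTop 1] with x hx1
      have hxpos : (0:ℝ) < (x:ℝ) := by exact_mod_cast hx1
      obtain ⟨q, r, hxq, hrL⟩ : ∃ q r, x = q * L + r ∧ r < L :=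
        ⟨x / L, x % L, (Nat.div_add_mod' x L).symm, Nat.mod_lt x hL0⟩
      have hkey : cnt H x = q * cnt H L + cnt H r := by
        conv_lhs => rw [hxq]
        exact cnt_decomp H L hL q r
      have hxeq : (x:ℝ) = q * Lr + r := by
        rw [hLr]; exact_mod_cast hxq
      have hsle : (cnt H r : ℝ) ≤ (r:ℝ) := by exact_mod_cast cnt_le H r
      have hsnn : (0:ℝ) ≤ (cnt H r : ℝ) := by positivity
      have hrlt : (r:ℝ) < Lr := by rw [hLr]; exact_mod_cast hrL
      have hrnn : (0:ℝ) ≤ (r:ℝ) := by positivity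
      have heq : (cnt H x : ℝ) / x - c / Lr = (Lr * (cnt H r) - c * r) / (Lr * x) := by
        rw [hkey]
        push_cast
        rw [div_sub_div _ _ (ne_of_gt hxpos) (ne_of_gt hLrpos), mul_comm (x:ℝ) Lr]
        congr 1
        rw [hxeq, ← hc]
        ring
      rw [Real.norm_eq_abs, heq, abs_div, abs_of_pos (by positivity : (0:ℝ) < Lr * x)]
      have h1 : |Lr * (cnt H r) - c * r| ≤ 2 * Lr * Lr := by
        rw [abs_le]
        constructor <;>
          nlinarith [mul_nonneg hcnn hrnn, mul_nonneg hLrpos.le hsnn,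
            mul_le_mul hcle hrlt.le hrnn hLrpos.le, mul_le_mul_of_nonneg_left hsle hLrpos.le,
            mul_le_mul_of_nonneg_left hrlt.le hLrpos.le]
      calc |Lr * (cnt H r) - c * r| / (Lr * x) ≤ (2 * Lr * Lr) / (Lr * x) := by gcongr
        _ = 2 * Lr / x := by field_simp
    · exact tendsto_const_div_atTop_nhds_zero_nat (2 * Lr)
  have := hzero.add_const (c / Lr)
  simpa using this

lemma div_count (P Q : ℕ → Prop) [DecidablePred P] [DecidablePred Q] (p M : ℕ) (hp : 0 < p)
    (hPQ : ∀ m, 0 < m → (P (p * m) ↔ Q m)) :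
    ((Finset.Ioc 0 (p * M)).filter (fun n => p ∣ n ∧ P n)).card
      = ((Finset.Ioc 0 M).filter Q).card := by
  apply Finset.card_nbij' (fun n => n / p) (fun m => p * m)
  · intro n hn
    simp only [Finset.mem_coe, Finset.mem_filter, Finset.mem_Ioc] at hn ⊢
    obtain ⟨⟨h1, h2⟩, hdvd, hP⟩ := hn
    have h3 : p * (n / p) = n := Nat.mul_div_cancel' hdvd
    have h4 : 0 < n / p := Nat.div_pos (Nat.le_of_dvd h1 hdvd) hp
    have h5 : n / p ≤ M := by
      have := Nat.div_le_div_right (c := p) h2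
      rwa [Nat.mul_div_cancel_left M hp] at this
    exact ⟨⟨h4, h5⟩, (hPQ _ h4).mp (by rwa [h3])⟩
  · intro m hm
    simp only [Finset.mem_coe, Finset.mem_filter, Finset.mem_Ioc] at hm ⊢
    obtain ⟨⟨h1, h2⟩, hQ⟩ := hm
    exact ⟨⟨Nat.mul_pos hp h1, Nat.mul_le_mul_left p h2⟩, dvd_mul_right p m,
      (hPQ m h1).mpr hQ⟩
  · intro n hn
    simp only [Finset.mem_coe, Finset.mem_filter, Finset.mem_Ioc] at hn
    exact Nat.mul_div_cancel' hn.2.1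
  · intro m _
    exact Nat.mul_div_cancel_left m hp

lemma scaled_iff (H : Finset ℕ) (p : ℕ) (hp : p.Prime) (m : ℕ) :
    (∃ h ∈ H, h ∣ p * m) ↔ (∃ h' ∈ H.image (fun h => h / Nat.gcd h p), h' ∣ m) := by
  constructor
  · rintro ⟨h, hh, hdvd⟩
    by_cases hph : p ∣ h
    · have hg : Nat.gcd h p = p := Nat.gcd_eq_right hph
      refine ⟨h / p, Finset.mem_image.mpr ⟨h, hh, by rw [hg]⟩, ?_⟩
      have h2 : p * (h / p) = h := Nat.mul_div_cancel' hph
      rw [← h2] at hdvd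
      exact (Nat.mul_dvd_mul_iff_left hp.pos).mp hdvd
    · have hcop : Nat.Coprime h p := (Nat.coprime_comm.mp ((Nat.Prime.coprime_iff_not_dvd hp).mpr hph))
      refine ⟨h, Finset.mem_image.mpr ⟨h, hh, by rw [hcop, Nat.div_one]⟩, ?_⟩
      exact hcop.dvd_of_dvd_mul_left hdvd
  · rintro ⟨h', hmem, hdvd⟩
    obtain ⟨h, hh, rfl⟩ := Finset.mem_image.mp hmem
    refine ⟨h, hh, ?_⟩
    by_cases hph : p ∣ h
    · have hg : Nat.gcd h p = p := Nat.gcd_eq_right hph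
      rw [hg] at hdvd
      calc h = p * (h / p) := (Nat.mul_div_cancel' hph).symm
        _ ∣ p * m := Nat.mul_dvd_mul_left p hdvd
    · have hcop : Nat.Coprime h p := (Nat.coprime_comm.mp ((Nat.Prime.coprime_iff_not_dvd hp).mpr hph))
      rw [hcop, Nat.div_one] at hdvd
      exact Dvd.dvd.mul_left hdvd p

lemma sieved_iff (H : Finset ℕ) (p : ℕ) (hp : p.Prime) (m : ℕ) :
    (∃ h ∈ H.filter (fun h => ¬ p ∣ h), h ∣ p * m) ↔
      (∃ h ∈ H.filter (fun h => ¬ p ∣ h), h ∣ m) := by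
  constructor
  · rintro ⟨h, hh, hdvd⟩
    have hph : ¬ p ∣ h := (Finset.mem_filter.mp hh).2
    have hcop : Nat.Coprime h p := (Nat.coprime_comm.mp ((Nat.Prime.coprime_iff_not_dvd hp).mpr hph))
    exact ⟨h, hh, hcop.dvd_of_dvd_mul_left hdvd⟩
  · rintro ⟨h, hh, hdvd⟩
    exact ⟨h, hh, Dvd.dvd.mul_left hdvd p⟩

lemma cnt_split_p (F : Finset ℕ) (x p : ℕ) :
    cnt F x = ((Finset.Ioc 0 x).filter (fun n => p ∣ n ∧ ∃ h ∈ F, h ∣ n)).card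
      + ((Finset.Ioc 0 x).filter (fun n => ¬ p ∣ n ∧ ∃ h ∈ F, h ∣ n)).card := by
  classical
  have key := Finset.card_filter_add_card_filter_not
    (s := (Finset.Ioc 0 x).filter (fun n => ∃ h ∈ F, h ∣ n)) (p := fun n => p ∣ n)
  rw [Finset.filter_filter, Finset.filter_filter] at key
  unfold cnt
  rw [← key]
  congr 1
  · apply congrArg; apply Finset.filter_congr; intro y _; constructor <;> tauto
  · apply congrArg; apply Finset.filter_congr; intro y _; constructor <;> tauto

/-- Behrend's identity -/
theorem stmt2 (H : Finset ℕ) (hH : ∀ h ∈ H, 0 < h) (p : ℕ) (hp : p.Prime) :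
    ∃ δ δ₁ δ₂ : ℝ,
      HasDensity (setOfMultiples H) δ ∧
      HasDensity (setOfMultiples (H.image fun h => h / Nat.gcd h p)) δ₁ ∧
      HasDensity (setOfMultiples (H.filter fun h => ¬ p ∣ h)) δ₂ ∧
      δ = (1 / (p : ℝ)) * δ₁ + (1 - 1 / (p : ℝ)) * δ₂ := by
  classical
  set L₁ := H.lcm id with hL₁def
  have hL₁pos : 0 < L₁ := by
    rw [pos_iff_ne_zero]
    intro h0
    rw [hL₁def] at h0
    have := Finset.lcm_eq_zero_iff.mp h0
    obtain ⟨h, hh, hid⟩ := this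
    have := hH h hh
    simp only [id] at hid
    omega
  have hdvd₁ : ∀ h ∈ H, h ∣ L₁ := fun h hh => Finset.dvd_lcm hh
  set H₁ := H.image fun h => h / Nat.gcd h p with hH₁def
  set H₂ := H.filter fun h => ¬ p ∣ h with hH₂def
  have hH₁dvd : ∀ h' ∈ H₁, h' ∣ L₁ := by
    intro h' hm
    rw [hH₁def] at hm
    obtain ⟨h, hh, rfl⟩ := Finset.mem_image.mp hm
    exact dvd_trans (Nat.div_dvd_of_dvd (Nat.gcd_dvd_left h p)) (hdvd₁ h hh)
  have hp0 : 0 < p := hp.pos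
  have hLpos : 0 < p * L₁ := Nat.mul_pos hp0 hL₁pos
  have hdvdL : ∀ h ∈ H, h ∣ p * L₁ := fun h hh => (hdvd₁ h hh).mul_left p
  have hH₂dvd₁ : ∀ h ∈ H₂, h ∣ L₁ := fun h hh => hdvd₁ h (Finset.mem_filter.mp hh).1
  have hH₂dvdL : ∀ h ∈ H₂, h ∣ p * L₁ := fun h hh => (hH₂dvd₁ h hh).mul_left p
  refine ⟨_, _, _, hasDensity_cnt H (p * L₁) hLpos hdvdL,
    hasDensity_cnt H₁ L₁ hL₁pos hH₁dvd, hasDensity_cnt H₂ (p * L₁) hLpos hH₂dvdL, ?_⟩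
  -- counting identities
  have hA : ((Finset.Ioc 0 (p * L₁)).filter (fun n => p ∣ n ∧ ∃ h ∈ H, h ∣ n)).card
      = cnt H₁ L₁ :=
    div_count _ _ p L₁ hp0 (fun m _ => scaled_iff H p hp m)
  have hE : ((Finset.Ioc 0 (p * L₁)).filter (fun n => p ∣ n ∧ ∃ h ∈ H₂, h ∣ n)).card
      = cnt H₂ L₁ :=
    div_count _ _ p L₁ hp0 (fun m _ => sieved_iff H p hp m)
  have hBeq : ((Finset.Ioc 0 (p * L₁)).filter (fun n => ¬ p ∣ n ∧ ∃ h ∈ H, h ∣ n))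
      = ((Finset.Ioc 0 (p * L₁)).filter (fun n => ¬ p ∣ n ∧ ∃ h ∈ H₂, h ∣ n)) := by
    apply Finset.filter_congr
    intro n _
    constructor
    · rintro ⟨hnp, h, hh, hd⟩
      exact ⟨hnp, h, Finset.mem_filter.mpr ⟨hh, fun hph => hnp (hph.trans hd)⟩, hd⟩
    · rintro ⟨hnp, h, hh, hd⟩
      exact ⟨hnp, h, (Finset.mem_filter.mp hh).1, hd⟩
  set B := ((Finset.Ioc 0 (p * L₁)).filter (fun n => ¬ p ∣ n ∧ ∃ h ∈ H₂, h ∣ n)).card with hBdef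
  have h1 : cnt H (p * L₁) = cnt H₁ L₁ + B := by
    rw [cnt_split_p H (p * L₁) p, hA, hBeq]
  have h2 : cnt H₂ (p * L₁) = cnt H₂ L₁ + B := by
    rw [cnt_split_p H₂ (p * L₁) p, hE]
  have h3 : cnt H₂ (p * L₁) = p * cnt H₂ L₁ := cnt_mul H₂ L₁ hH₂dvd₁ p
  -- real arithmetic
  have hpR : (p : ℝ) ≠ 0 := Nat.cast_ne_zero.mpr hp0.ne'
  have hLR : (L₁ : ℝ) ≠ 0 := Nat.cast_ne_zero.mpr hL₁pos.ne'
  have hcR : (cnt H (p * L₁) : ℝ) = (cnt H₁ L₁ : ℝ) + (B : ℝ) := by exact_mod_cast h1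
  have hc2R : (cnt H₂ (p * L₁) : ℝ) = (p : ℝ) * (cnt H₂ L₁ : ℝ) := by exact_mod_cast h3
  have hBR : (B : ℝ) = (p : ℝ) * (cnt H₂ L₁ : ℝ) - (cnt H₂ L₁ : ℝ) := by
    have : (cnt H₂ (p * L₁) : ℝ) = (cnt H₂ L₁ : ℝ) + (B : ℝ) := by exact_mod_cast h2
    linarith
  rw [hcR, hc2R, hBR]
  push_cast
  field_simp
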